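/- On the null-shell chart U of the Schwarzschild exterior of mass M, the following two pointwise identities of vector fields hold at every point of U: φ_−·V_− + φ_+·V_+ = 2r²·𝐑 + 54M²·p_t·∂_t, and φ_−·V_− − φ_+·V_+ = ( 54M²·p_t/(r^{1/2}(r+6M)^{1/2}) )·𝐋, where 𝐑 := −(p_t/Ω²)·∂_t + (p_{r*}/Ω²)·∂_{r*} + ((r−3M)/r⁴)·ℓ²·∂_{p_{r*}} and 𝐋 := −(g(r)·p_{r*}/(Ω²·p_t))·∂_t + g(r)·∂_r + p_{r*}·∂_{p_{r*}} with g(r) := r(r−3M)(r+6M)/(27M²). -/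

import Mathlib

open Real

noncomputable section

namespace SchwVlasov

/-- Points of the null-shell chart: coordinates `(t, r, θ, φ, p_{r*}, p_θ, p_φ)`. -/
abbrev Pt : Type := Fin 7 → ℝ

/-- The null-shell chart `U`: `r > 2M`, `θ ∈ (0, π)`, `p_θ² + p_φ²/sin²θ > 0`. -/
def U (M : ℝ) : Set Pt :=
  {x | 2 * M < x 1 ∧ 0 < x 2 ∧ x 2 < Real.pi ∧
    0 < (x 5) ^ 2 + (x 6) ^ 2 / (Real.sin (x 2)) ^ 2}

/-- The Lie bracket `[V, W](x) = DW(x)·V(x) − DV(x)·W(x)` of vector fields on `ℝ⁷`. -/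
def lieBracket (V W : Pt → Pt) (x : Pt) : Pt :=
  fderiv ℝ W x (V x) - fderiv ℝ V x (W x)

/-- `Ω²(r) = 1 − 2M/r`. -/
def Om2 (M : ℝ) (x : Pt) : ℝ := 1 - 2 * M / x 1

/-- `Ω(r) = (1 − 2M/r)^{1/2}`. -/
def Om (M : ℝ) (x : Pt) : ℝ := Real.sqrt (Om2 M x)

/-- The total angular momentum `ℓ = (p_θ² + p_φ²/sin²θ)^{1/2}`. -/
def ell (x : Pt) : ℝ := Real.sqrt ((x 5) ^ 2 + (x 6) ^ 2 / (Real.sin (x 2)) ^ 2)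

/-- `p_t = −(p_{r*}² + Ω²ℓ²/r²)^{1/2}`. -/
def ptm (M : ℝ) (x : Pt) : ℝ := -Real.sqrt ((x 4) ^ 2 + Om2 M x * (ell x) ^ 2 / (x 1) ^ 2)

/-- The coordinate vector field `∂_t`. -/
def dt : Pt := ![1, 0, 0, 0, 0, 0, 0]
/-- The coordinate vector field `∂_r`. -/
def dr : Pt := ![0, 1, 0, 0, 0, 0, 0]
/-- The coordinate vector field `∂_θ`. -/
def dth : Pt := ![0, 0, 1, 0, 0, 0, 0]
/-- The coordinate vector field `∂_φ`. -/
def dph : Pt := ![0, 0, 0, 1, 0, 0, 0]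
/-- The coordinate vector field `∂_{p_{r*}}`. -/
def dpr : Pt := ![0, 0, 0, 0, 1, 0, 0]
/-- The coordinate vector field `∂_{p_θ}`. -/
def dpth : Pt := ![0, 0, 0, 0, 0, 1, 0]

/-- The tortoise radial derivative `∂_{r*} = Ω²·∂_r`, viewed as a vector field. -/
def drstar (M : ℝ) (x : Pt) : Pt := Om2 M x • dr

/-- The geodesic spray `𝕏_g`. -/
def Xg (M : ℝ) (x : Pt) : Pt :=
  (-(ptm M x) / Om2 M x) • dt + (x 4 / Om2 M x) • drstar M x
    + (x 5 / (x 1) ^ 2) • dth + (x 6 / ((x 1) ^ 2 * (Real.sin (x 2)) ^ 2)) • dph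
    + ((x 1 - 3 * M) / (x 1) ^ 4 * (ell x) ^ 2) • dpr
    + (Real.cos (x 2) / ((x 1) ^ 2 * (Real.sin (x 2)) ^ 3) * (x 6) ^ 2) • dpth

/-- The trapping weight `φ₋ = (r/Ω)·p_{r*} + (r/Ω)·(1+6M/r)^{1/2}·(1−3M/r)·p_t`. -/
def phiMinus (M : ℝ) (x : Pt) : ℝ :=
  x 1 / Om M x * x 4
    + x 1 / Om M x * Real.sqrt (1 + 6 * M / x 1) * (1 - 3 * M / x 1) * ptm M x

/-- The trapping vector field
`V₊ = ((r+6M)^{1/2}/(r^{1/2}Ω))·(r−3M)·∂_t + (r/Ω)·∂_{r*}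
  − (((r−3M)/(rΩ))·p_{r*} + (r^{1/2}/((r+6M)^{1/2}Ω))·p_t)·∂_{p_{r*}}`. -/
def Vplus (M : ℝ) (x : Pt) : Pt :=
  (Real.sqrt (x 1 + 6 * M) / (Real.sqrt (x 1) * Om M x) * (x 1 - 3 * M)) • dt
    + (x 1 / Om M x) • drstar M x
    - ((x 1 - 3 * M) / (x 1 * Om M x) * x 4
        + Real.sqrt (x 1) / (Real.sqrt (x 1 + 6 * M) * Om M x) * ptm M x) • dpr

/-- The trapping weight `φ₊ = (r/Ω)·p_{r*} − (r/Ω)·(1+6M/r)^{1/2}·(1−3M/r)·p_t`. -/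
def phiPlus (M : ℝ) (x : Pt) : ℝ :=
  x 1 / Om M x * x 4
    - x 1 / Om M x * Real.sqrt (1 + 6 * M / x 1) * (1 - 3 * M / x 1) * ptm M x

/-- The vector field
`V₋ = −((r+6M)^{1/2}/(r^{1/2}Ω))·(r−3M)·∂_t + (r/Ω)·∂_{r*}
  − (((r−3M)/(rΩ))·p_{r*} − (r^{1/2}/((r+6M)^{1/2}Ω))·p_t)·∂_{p_{r*}}`. -/
def Vminus (M : ℝ) (x : Pt) : Pt :=
  (-(Real.sqrt (x 1 + 6 * M) / (Real.sqrt (x 1) * Om M x) * (x 1 - 3 * M))) • dt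
    + (x 1 / Om M x) • drstar M x
    - ((x 1 - 3 * M) / (x 1 * Om M x) * x 4
        - Real.sqrt (x 1) / (Real.sqrt (x 1 + 6 * M) * Om M x) * ptm M x) • dpr

/-- The time-radial part of the geodesic spray,
`𝐑 = −(p_t/Ω²)·∂_t + (p_{r*}/Ω²)·∂_{r*} + ((r−3M)/r⁴)·ℓ²·∂_{p_{r*}}`. -/
def Rbold (M : ℝ) (x : Pt) : Pt :=
  (-(ptm M x) / Om2 M x) • dt + (x 4 / Om2 M x) • drstar M x
    + ((x 1 - 3 * M) / (x 1) ^ 4 * (ell x) ^ 2) • dpr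

/-- `g(r) = r(r−3M)(r+6M)/(27M²)`. -/
def gfun (M rv : ℝ) : ℝ := rv * (rv - 3 * M) * (rv + 6 * M) / (27 * M ^ 2)

/-- The vector field `𝐋 = −(g(r)·p_{r*}/(Ω²·p_t))·∂_t + g(r)·∂_r + p_{r*}·∂_{p_{r*}}`. -/
def Lbold (M : ℝ) (x : Pt) : Pt :=
  (-(gfun M (x 1) * x 4 / (Om2 M x * ptm M x))) • dt + gfun M (x 1) • dr + x 4 • dpr

lemma vec7_app5 (a b c d e f g : ℝ) : (![a,b,c,d,e,f,g] : Pt) 5 = f := rfl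
lemma vec7_app6 (a b c d e f g : ℝ) : (![a,b,c,d,e,f,g] : Pt) 6 = g := rfl

set_option maxHeartbeats 2000000 in
/-- the pointwise identities
`φ₋·V₋ + φ₊·V₊ = 2r²·𝐑 + 54M²·p_t·∂_t` and
`φ₋·V₋ − φ₊·V₊ = (54M²·p_t/(r^{1/2}(r+6M)^{1/2}))·𝐋` on the null-shell chart. -/
theorem phi_V_decomposition (M : ℝ) (hM : 0 < M) (x : Pt) (hx : x ∈ U M) :
    phiMinus M x • Vminus M x + phiPlus M x • Vplus M x
        = (2 * (x 1) ^ 2) • Rbold M x + (54 * M ^ 2 * ptm M x) • dt ∧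
    phiMinus M x • Vminus M x - phiPlus M x • Vplus M x
        = (54 * M ^ 2 * ptm M x / (Real.sqrt (x 1) * Real.sqrt (x 1 + 6 * M))) • Lbold M x := by
  obtain ⟨hr, hth0, hthpi, hL2⟩ := hx
  have hr0 : (0:ℝ) < x 1 := lt_trans (by linarith) hr
  have hOm2pos : 0 < Om2 M x := by
    unfold Om2; rw [sub_pos, div_lt_one hr0]; linarith
  have hw0 : 0 < Om M x := Real.sqrt_pos.mpr hOm2pos
  have hw2 : Om M x ^ 2 = 1 - 2 * M / x 1 := Real.sq_sqrt hOm2pos.le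
  have hsr0 : 0 < Real.sqrt (x 1) := Real.sqrt_pos.mpr hr0
  have hs60 : 0 < Real.sqrt (x 1 + 6 * M) := Real.sqrt_pos.mpr (by linarith)
  have hsr2 : Real.sqrt (x 1) ^ 2 = x 1 := Real.sq_sqrt hr0.le
  have hs62 : Real.sqrt (x 1 + 6 * M) ^ 2 = x 1 + 6 * M := Real.sq_sqrt (by linarith)
  have hl2 : ell x ^ 2 = x 5 ^ 2 + x 6 ^ 2 / Real.sin (x 2) ^ 2 := Real.sq_sqrt hL2.le
  have hqrad : (0:ℝ) < x 4 ^ 2 + Om2 M x * ell x ^ 2 / x 1 ^ 2 := by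
    have : 0 < Om2 M x * ell x ^ 2 / x 1 ^ 2 := by
      apply div_pos (mul_pos hOm2pos (by rw [hl2]; exact hL2)) (by positivity)
    nlinarith [sq_nonneg (x 4)]
  have hq0 : ptm M x < 0 := by
    unfold ptm; simp only [neg_neg, neg_lt_zero]; exact Real.sqrt_pos.mpr hqrad
  have hOm2w : Om2 M x = Om M x ^ 2 := hw2.symm.trans rfl
  have hq2 : ptm M x ^ 2 = x 4 ^ 2 + Om M x ^ 2 * ell x ^ 2 / x 1 ^ 2 := by
    unfold ptm; rw [neg_sq, ← hOm2w]; exact Real.sq_sqrt hqrad.le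
  have hA : Real.sqrt (1 + 6 * M / x 1) = Real.sqrt (x 1 + 6 * M) / Real.sqrt (x 1) := by
    rw [show 1 + 6 * M / x 1 = (x 1 + 6 * M) / x 1 by field_simp, Real.sqrt_div (by linarith)]
  have hs4 : Real.sqrt (x 1) ^ 4 = x 1 ^ 2 := by
    rw [show (4:ℕ) = 2 * 2 from rfl, pow_mul, hsr2]
  have hq2p : ptm M x ^ 2 * Real.sqrt (x 1) ^ 4
      = x 4 ^ 2 * Real.sqrt (x 1) ^ 4 + Om M x ^ 2 * ell x ^ 2 := by
    rw [hs4, hq2]; field_simp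
  have hw2p : Om M x ^ 2 * Real.sqrt (x 1) ^ 2 = Real.sqrt (x 1) ^ 2 - 2 * M := by
    rw [hsr2, hw2]; field_simp
  have hu2p : Real.sqrt (x 1 + 6 * M) ^ 2 = Real.sqrt (x 1) ^ 2 + 6 * M := by
    rw [hs62, hsr2]
  constructor
  · funext i
    fin_cases i <;>
      simp only [phiMinus, phiPlus, Vminus, Vplus, Rbold, drstar, dt, dr, dpr,
        Pi.add_apply, Pi.sub_apply, Pi.smul_apply, smul_eq_mul] <;>
      simp [Matrix.cons_val_succ, Fin.isValue, vec7_app5, vec7_app6] <;>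
      simp only [hA, hOm2w] <;>
      field_simp [hsr0.ne', hs60.ne', hw0.ne', hq0.ne, hr0.ne', hM.ne']
    · linear_combination (((2:ℝ) * (x 1) * Real.sqrt (x 1 + 6 * M) ^ 2 * ptm M x) + ((-12:ℝ) * Real.sqrt (x 1 + 6 * M) ^ 2 * M * ptm M x) + ((-2:ℝ) * (x 1) * Real.sqrt (x 1) ^ 2 * ptm M x) + ((2:ℝ) * Real.sqrt (x 1) ^ 2 * Real.sqrt (x 1 + 6 * M) ^ 2 * ptm M x) + ((-2:ℝ) * Real.sqrt (x 1) ^ 4 * ptm M x)) * hsr2 + (((-18:ℝ) * M ^ 2 * ptm M x) + ((12:ℝ) * Real.sqrt (x 1) ^ 2 * M * ptm M x) + ((-2:ℝ) * Real.sqrt (x 1) ^ 4 * ptm M x)) * hu2p + (((-54:ℝ) * M ^ 2 * ptm M x)) * hw2p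
    · ring
    · linear_combination (((2:ℝ) * (x 1) ^ 2 * Real.sqrt (x 1) * Real.sqrt (x 1 + 6 * M) * (x 4) ^ 2) + ((-6:ℝ) * (x 1) * Real.sqrt (x 1) * Real.sqrt (x 1 + 6 * M) * M * (x 4) ^ 2) + ((-2:ℝ) * (x 1) ^ 2 * Real.sqrt (x 1) * Real.sqrt (x 1 + 6 * M) * ptm M x ^ 2) + ((6:ℝ) * (x 1) * Real.sqrt (x 1) * Real.sqrt (x 1 + 6 * M) * M * ptm M x ^ 2) + ((2:ℝ) * Real.sqrt (x 1) * Real.sqrt (x 1 + 6 * M) * Om M x ^ 2 * ell x ^ 2) + ((2:ℝ) * (x 1) * Real.sqrt (x 1) ^ 3 * Real.sqrt (x 1 + 6 * M) * (x 4) ^ 2) + ((-6:ℝ) * Real.sqrt (x 1) ^ 3 * Real.sqrt (x 1 + 6 * M) * M * (x 4) ^ 2) + ((-2:ℝ) * (x 1) * Real.sqrt (x 1) ^ 3 * Real.sqrt (x 1 + 6 * M) * ptm M x ^ 2) + ((6:ℝ) * Real.sqrt (x 1) ^ 3 * Real.sqrt (x 1 + 6 * M) * M * ptm M x ^ 2)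 + ((2:ℝ) * Real.sqrt (x 1) ^ 5 * Real.sqrt (x 1 + 6 * M) * (x 4) ^ 2) + ((-2:ℝ) * Real.sqrt (x 1) ^ 5 * Real.sqrt (x 1 + 6 * M) * ptm M x ^ 2)) * hsr2 + (((3:ℝ) * Real.sqrt (x 1) * Real.sqrt (x 1 + 6 * M) * Om M x ^ 2 * ell x ^ 2) + ((3:ℝ) * Real.sqrt (x 1) ^ 5 * Real.sqrt (x 1 + 6 * M) * (x 4) ^ 2) + ((-3:ℝ) * Real.sqrt (x 1) ^ 5 * Real.sqrt (x 1 + 6 * M) * ptm M x ^ 2)) * hw2p + (((-1:ℝ) * Real.sqrt (x 1) ^ 3 * Real.sqrt (x 1 + 6 * M)) + ((3:ℝ) * Real.sqrt (x 1) ^ 3 * Real.sqrt (x 1 + 6 * M) * Om M x ^ 2)) * hq2p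
  · funext i
    fin_cases i <;>
      simp only [phiMinus, phiPlus, Vminus, Vplus, Lbold, drstar, dt, dr, dpr, gfun,
        Pi.add_apply, Pi.sub_apply, Pi.smul_apply, smul_eq_mul] <;>
      simp [Matrix.cons_val_succ, Fin.isValue, vec7_app5, vec7_app6] <;>
      simp only [hA, hOm2w] <;>
      field_simp [hsr0.ne', hs60.ne', hw0.ne', hq0.ne, hr0.ne', hM.ne']
    · linear_combination (((54:ℝ) * (x 1) * Real.sqrt (x 1) * Real.sqrt (x 1 + 6 * M) ^ 2 * (x 4)) + ((-162:ℝ) * Real.sqrt (x 1) * Real.sqrt (x 1 + 6 * M) ^ 2 * M * (x 4)) + ((-54:ℝ) * (x 1) ^ 2 * Real.sqrt (x 1) * (x 4)) + ((-162:ℝ) * (x 1) * Real.sqrt (x 1) * M * (x 4)) + ((972:ℝ) * Real.sqrt (x 1) * M ^ 2 * (x 4)) + ((54:ℝ) * Real.sqrt (x 1) ^ 3 * Real.sqrt (x 1 + 6 * M) ^ 2 * (x 4)) + ((-54:ℝ) * (x 1) * Real.sqrt (x 1) ^ 3 * (x 4)) + ((-162:ℝ) * Real.sqrt (x 1) ^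 3 * M * (x 4)) + ((-54:ℝ) * Real.sqrt (x 1) ^ 5 * (x 4))) * hsr2 + (((162:ℝ) * Real.sqrt (x 1) ^ 3 * M * (x 4)) + ((-54:ℝ) * Real.sqrt (x 1) ^ 5 * (x 4))) * hu2p
    · linear_combination (((-54:ℝ) * Real.sqrt (x 1 + 6 * M) ^ 2 * ptm M x) + ((54:ℝ) * (x 1) * ptm M x) + ((162:ℝ) * M * ptm M x) + ((54:ℝ) * Real.sqrt (x 1) ^ 2 * ptm M x)) * hsr2 + (((-162:ℝ) * M * ptm M x) + ((54:ℝ) * Real.sqrt (x 1) ^ 2 * ptm M x)) * hu2p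
    · linear_combination (((-2:ℝ) * (x 1) * Real.sqrt (x 1) ^ 2 * ptm M x * (x 4)) + ((2:ℝ) * (x 1) * Real.sqrt (x 1 + 6 * M) ^ 2 * ptm M x * (x 4)) + ((-12:ℝ) * Real.sqrt (x 1 + 6 * M) ^ 2 * M * ptm M x * (x 4)) + ((54:ℝ) * M ^ 2 * Om M x ^ 2 * ptm M x * (x 4)) + ((-2:ℝ) * Real.sqrt (x 1) ^ 4 * ptm M x * (x 4)) + ((2:ℝ) * Real.sqrt (x 1) ^ 2 * Real.sqrt (x 1 + 6 * M) ^ 2 * ptm M x * (x 4))) * hsr2 + (((-18:ℝ) * M ^ 2 * ptm M x * (x 4)) + ((12:ℝ) * Real.sqrt (x 1) ^ 2 * M * ptm M x * (x 4)) + ((-2:ℝ) * Real.sqrt (x 1) ^ 4 * ptm M x * (x 4))) * hu2p + (((-54:ℝ) * M ^ 2 * ptm M x * (x 4))) * hw2p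

end SchwVlasov
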